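/- Let δ > 0. Let A : ℝ → ℝ be three times continuously differentiable and strictly convex, let η : ℝ → ℝ be twice continuously differentiable and strictly convex, and let q : ℝ → ℝ satisfy q'(u) = A'(u)·η'(u) for all u. Let u₊, u₋, ū₊, ū₋ ∈ ℝ satisfy u₊ ≤ u₋, u₋ − u₊ ≤ δ/2, and ū₋ − ū₊ ≥ δ. Then q(u₊;ū₊) − q(u₋;ū₋) − σ(u₊,u₋)·(η(u₊|ū₊) − η(u₋|ū₋)) < 0 (strictly). -/

import Mathlib

open Set MeasureTheory

/-- If a continuous function is nonnegative on `[l,r]` and positive at an interior point,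
its interval integral is positive. -/
lemma aux_integral_pos_of_nonneg_of_pos_pt {g : ℝ → ℝ} (hg : Continuous g)
    {l r x₀ : ℝ} (hlr : l < r) (hx₀ : x₀ ∈ Set.Ioo l r)
    (hnn : ∀ x ∈ Set.Icc l r, 0 ≤ g x) (hpos : 0 < g x₀) :
    0 < ∫ x in l..r, g x := by
  obtain ⟨ε, hε, hball⟩ : ∃ ε > 0, Metric.ball x₀ ε ⊆ g ⁻¹' Set.Ioi 0 := by
    have hopen : IsOpen (g ⁻¹' Set.Ioi 0) := isOpen_Ioi.preimage hg
    exact Metric.isOpen_iff.mp hopen x₀ hpos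
  set ε₁ : ℝ := min ε (min (x₀ - l) (r - x₀)) with hε₁def
  have hε₁ : 0 < ε₁ := by
    apply lt_min hε
    exact lt_min (by linarith [hx₀.1]) (by linarith [hx₀.2])
  set a : ℝ := x₀ - ε₁ / 2 with ha
  set b : ℝ := x₀ + ε₁ / 2 with hb
  have hla : l ≤ a := by
    have : ε₁ ≤ x₀ - l := (min_le_right _ _).trans (min_le_left _ _)
    simp only [ha]; linarith
  have hbr : b ≤ r := by
    have : ε₁ ≤ r - x₀ := (min_le_right _ _).trans (min_le_right _ _)
    simp only [hb]; linarith
  have hab : a < b := by simp only [ha, hb]; linarith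
  have hInt : ∀ u v : ℝ, IntervalIntegrable g volume u v := fun u v =>
    hg.intervalIntegrable u v
  have hmid : 0 < ∫ x in a..b, g x := by
    apply intervalIntegral.intervalIntegral_pos_of_pos_on (hInt a b) _ hab
    intro x hx
    have : x ∈ Metric.ball x₀ ε := by
      rw [Real.ball_eq_Ioo]
      constructor
      · have := hx.1; have h1 : ε₁ ≤ ε := min_le_left _ _
        simp only [ha] at this; linarith
      · have := hx.2; have h1 : ε₁ ≤ ε := min_le_left _ _
        simp only [hb] at this; linarith
    exact hball this
  have h1 : 0 ≤ ∫ x in l..a, g x := by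
    apply intervalIntegral.integral_nonneg hla
    intro u hu; exact hnn u ⟨hu.1, hu.2.trans (hab.le.trans hbr)⟩
  have h2 : 0 ≤ ∫ x in b..r, g x := by
    apply intervalIntegral.integral_nonneg hbr
    intro u hu; exact hnn u ⟨(hla.trans (hab.le)).trans hu.1, hu.2⟩
  have e1 : ∫ x in l..b, g x = (∫ x in l..a, g x) + ∫ x in a..b, g x :=
    (intervalIntegral.integral_add_adjacent_intervals (hInt l a) (hInt a b)).symm
  have e2 : ∫ x in l..r, g x = (∫ x in l..b, g x) + ∫ x in b..r, g x :=
    (intervalIntegral.integral_add_adjacent_intervals (hInt l b) (hInt b r)).symm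
  rw [e2, e1]; linarith

/-- If `u₊ ≤ u₋`, `u₋ − u₊ ≤ δ/2` and `ū₋ − ū₊ ≥ δ`, then the relative entropy
dissipation of the shock is strictly negative. -/
theorem entropy_dissipation_strictly_negative
    (δ : ℝ) (hδ : 0 < δ)
    (A η q : ℝ → ℝ)
    (hA : ContDiff ℝ 3 A) (hA_conv : StrictConvexOn ℝ Set.univ A)
    (hη : ContDiff ℝ 2 η) (hη_conv : StrictConvexOn ℝ Set.univ η)
    (hq : ∀ u : ℝ, HasDerivAt q (deriv A u * deriv η u) u)
    (σ : ℝ → ℝ → ℝ)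
    (hσ_off : ∀ v w : ℝ, v ≠ w → σ v w = (A v - A w) / (v - w))
    (hσ_diag : ∀ v : ℝ, σ v v = deriv A v)
    (up um bup bum : ℝ)
    (h1 : up ≤ um) (h2 : um - up ≤ δ / 2) (h3 : δ ≤ bum - bup) :
    ((q up - q bup - deriv η bup * (A up - A bup))
        - (q um - q bum - deriv η bum * (A um - A bum)))
      - σ up um * ((η up - η bup - deriv η bup * (up - bup))
        - (η um - η bum - deriv η bum * (um - bum))) < 0 := by
  -- differentiability facts
  have hA_diff : Differentiable ℝ A := hA.differentiable (by norm_num)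
  have hη_diff : Differentiable ℝ η := hη.differentiable (by norm_num)
  have hη1 : ContDiff ℝ 1 (deriv η) := by
    have h2' : ContDiff ℝ ((1:WithTop ℕ∞) + 1) η := by norm_num; exact hη
    exact (contDiff_succ_iff_deriv.mp h2').2.2
  have hηd_diff : Differentiable ℝ (deriv η) := hη1.differentiable one_ne_zero
  have hηdd_cont : Continuous (deriv (deriv η)) := hη1.continuous_deriv le_rfl
  have hA_cont : Continuous A := hA.continuous
  have hAd_mono : StrictMono (deriv A) := by
    have := hA_conv.strictMonoOn_deriv (fun x _ => (hA_diff x))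
    exact fun a b hab => this (mem_univ a) (mem_univ b) hab
  have hηd_mono : StrictMono (deriv η) := by
    have := hη_conv.strictMonoOn_deriv (fun x _ => (hη_diff x))
    exact fun a b hab => this (mem_univ a) (mem_univ b) hab
  set σ0 : ℝ := σ up um with hσ0
  -- Rankine-Hugoniot relation
  have hRH : A um = A up + σ0 * (um - up) := by
    rcases eq_or_lt_of_le h1 with heq | hlt
    · subst heq; ring
    · have hne : up ≠ um := ne_of_lt hlt
      rw [hσ0, hσ_off up um hne]
      have hne' : up - um ≠ 0 := sub_ne_zero.mpr hne
      field_simp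
      ring
  -- σ0 between deriv A up and deriv A um
  have hσ0_bounds : deriv A up ≤ σ0 ∧ σ0 ≤ deriv A um := by
    rcases eq_or_lt_of_le h1 with heq | hlt
    · subst heq; rw [hσ0, hσ_diag]; exact ⟨le_rfl, le_rfl⟩
    · obtain ⟨ξ, hξ, hξeq⟩ := exists_hasDerivAt_eq_slope A (deriv A) hlt
        hA_cont.continuousOn (fun x _ => (hA_diff x).hasDerivAt)
      have hσval : σ0 = deriv A ξ := by
        rw [hσ0, hσ_off up um (ne_of_lt hlt), hξeq]
        rw [div_eq_div_iff (by linarith) (by linarith)]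
        ring
      constructor
      · rw [hσval]; exact (hAd_mono hξ.1).le
      · rw [hσval]; exact (hAd_mono hξ.2).le
  -- ψ and its properties
  set ψ : ℝ → ℝ := fun x => σ0 * (up - x) - (A up - A x) with hψdef
  have hψ_cont : Continuous ψ := by
    apply Continuous.sub
    · exact continuous_const.mul (continuous_const.sub continuous_id)
    · exact continuous_const.sub hA_cont
  have hψ_hasDeriv : ∀ x, HasDerivAt ψ (deriv A x - σ0) x := by
    intro x
    have := (((hasDerivAt_id x).const_sub up).const_mul σ0).sub
      ((hasDerivAt_const x (A up)).sub (hA_diff x).hasDerivAt)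
    exact this.congr_deriv (by ring)
  have hψ_up : ψ up = 0 := by simp [hψdef]
  have hψ_um : ψ um = 0 := by simp only [hψdef]; rw [hRH]; ring
  have hψ_pos_left : ∀ x, x < up → 0 < ψ x := by
    intro x hx
    have hanti : StrictAntiOn ψ (Iic up) := by
      apply strictAntiOn_of_deriv_neg (convex_Iic up) (hψ_cont.continuousOn)
      intro y hy
      rw [interior_Iic] at hy
      rw [(hψ_hasDeriv y).deriv]
      have : deriv A y < deriv A up := hAd_mono hy
      linarith [hσ0_bounds.1]
    have := hanti (mem_Iic.mpr hx.le) (mem_Iic.mpr le_rfl) hx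
    rwa [hψ_up] at this
  have hψ_pos_right : ∀ x, um < x → 0 < ψ x := by
    intro x hx
    have hmono : StrictMonoOn ψ (Ici um) := by
      apply strictMonoOn_of_deriv_pos (convex_Ici um) (hψ_cont.continuousOn)
      intro y hy
      rw [interior_Ici] at hy
      rw [(hψ_hasDeriv y).deriv]
      have : deriv A um < deriv A y := hAd_mono hy
      linarith [hσ0_bounds.2]
    have := hmono (mem_Ici.mpr le_rfl) (mem_Ici.mpr hx.le) hx
    rwa [hψ_um] at this
  have hψ_nonneg_left : ∀ x, x ≤ up → 0 ≤ ψ x := by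
    intro x hx
    rcases eq_or_lt_of_le hx with heq | hlt
    · subst heq; rw [hψ_up]
    · exact (hψ_pos_left x hlt).le
  have hψ_nonneg_right : ∀ x, um ≤ x → 0 ≤ ψ x := by
    intro x hx
    rcases eq_or_lt_of_le hx with heq | hlt
    · subst heq; rw [hψ_um]
    · exact (hψ_pos_right x hlt).le
  have hψ_nonpos_mid : ∀ x ∈ Icc up um, ψ x ≤ 0 := by
    intro x hx
    rcases eq_or_lt_of_le h1 with heq | hlt
    · have hxu : x = up := le_antisymm (heq ▸ hx.2) hx.1
      subst hxu; rw [hψ_up]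
    · set t : ℝ := (x - up) / (um - up) with ht
      have hden : (0:ℝ) < um - up := by linarith
      have ht0 : 0 ≤ t := div_nonneg (by linarith [hx.1]) hden.le
      have ht1 : t ≤ 1 := by
        rw [ht, div_le_one hden]; linarith [hx.2]
      have hxrep : (1 - t) • up + t • um = x := by
        show (1 - t) * up + t * um = x
        rw [ht]
        field_simp
        ring
      have hcvx := hA_conv.convexOn.2 (mem_univ up) (mem_univ um)
        (by linarith : (0:ℝ) ≤ 1 - t) ht0 (by ring)
      rw [hxrep] at hcvx
      simp only [smul_eq_mul] at hcvx
      have htx : t * (um - up) = x - up := by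
        rw [ht]
        field_simp
      have key : t * (A um - A up) = σ0 * (x - up) := by
        calc t * (A um - A up) = σ0 * (t * (um - up)) := by rw [hRH]; ring
          _ = σ0 * (x - up) := by rw [htx]
      show σ0 * (up - x) - (A up - A x) ≤ 0
      linarith [hcvx, key]
  -- second derivative of η is nonnegative
  have hηdd_nonneg : ∀ x, 0 ≤ deriv (deriv η) x := by
    intro x
    by_contra hcon
    push_neg at hcon
    obtain ⟨ε, hε, hball⟩ : ∃ ε > 0, Metric.ball x ε ⊆ (deriv (deriv η)) ⁻¹' Set.Iio 0 := by
      have hopen : IsOpen ((deriv (deriv η)) ⁻¹' Set.Iio 0) := isOpen_Iio.preimage hηdd_cont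
      exact Metric.isOpen_iff.mp hopen x hcon
    have hanti : StrictAntiOn (deriv η) (Icc (x - ε/2) (x + ε/2)) := by
      apply strictAntiOn_of_deriv_neg (convex_Icc _ _) (hηd_diff.continuous.continuousOn)
      intro y hy
      rw [interior_Icc] at hy
      have : y ∈ Metric.ball x ε := by
        rw [Real.ball_eq_Ioo]
        exact ⟨by linarith [hy.1, hε], by linarith [hy.2, hε]⟩
      exact hball this
    have hmem1 : x - ε/2 ∈ Icc (x - ε/2) (x + ε/2) := ⟨le_rfl, by linarith⟩
    have hmem2 : x ∈ Icc (x - ε/2) (x + ε/2) := ⟨by linarith, by linarith⟩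
    have h1' := hanti hmem1 hmem2 (by linarith)
    have h2' := hηd_mono (show x - ε/2 < x by linarith)
    linarith
  -- on any interval, η'' is positive somewhere
  have hηdd_somewhere : ∀ l r : ℝ, l < r → ∃ x ∈ Ioo l r, 0 < deriv (deriv η) x := by
    intro l r hlr
    by_contra hcon
    push_neg at hcon
    have hzero : ∀ x ∈ Ioo l r, deriv (deriv η) x = 0 := fun x hx =>
      le_antisymm (hcon x hx) (hηdd_nonneg x)
    set l' : ℝ := l + (r - l)/4 with hl'
    set r' : ℝ := l + (r - l)/2 with hr'
    have hl'r' : l' < r' := by simp only [hl', hr']; linarith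
    have hFTC : ∫ x in l'..r', deriv (deriv η) x = deriv η r' - deriv η l' := by
      apply intervalIntegral.integral_eq_sub_of_hasDerivAt
      · intro x _
        exact (hηd_diff x).hasDerivAt
      · exact hηdd_cont.intervalIntegrable _ _
    have hzeroint : ∫ x in l'..r', deriv (deriv η) x = 0 := by
      rw [intervalIntegral.integral_congr (g := fun _ => (0:ℝ))]
      · simp
      · intro x hx
        rw [uIcc_of_le hl'r'.le] at hx
        apply hzero
        constructor
        · have := hx.1; simp only [hl'] at this ⊢; linarith
        · have := hx.2; simp only [hr'] at this ⊢; linarith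
    have := hηd_mono hl'r'
    rw [hzeroint] at hFTC
    linarith
  -- the integrand
  set g : ℝ → ℝ := fun x => deriv (deriv η) x * ψ x with hgdef
  have hg_cont : Continuous g := hηdd_cont.mul hψ_cont
  have hInt : ∀ u v : ℝ, IntervalIntegrable g volume u v := fun u v =>
    hg_cont.intervalIntegrable u v
  -- positivity of integral of g over intervals outside (up, um)
  have hIpos : ∀ l r : ℝ, l < r → (r ≤ up ∨ um ≤ l) → 0 < ∫ x in l..r, g x := by
    intro l r hlr hside
    obtain ⟨x₀, hx₀mem, hx₀pos⟩ := hηdd_somewhere l r hlr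
    apply aux_integral_pos_of_nonneg_of_pos_pt hg_cont hlr hx₀mem
    · intro x hx
      apply mul_nonneg (hηdd_nonneg x)
      rcases hside with hs | hs
      · exact hψ_nonneg_left x (hx.2.trans hs)
      · exact hψ_nonneg_right x (hs.trans hx.1)
    · apply mul_pos hx₀pos
      rcases hside with hs | hs
      · exact hψ_pos_left x₀ (lt_of_lt_of_le hx₀mem.2 hs)
      · exact hψ_pos_right x₀ (lt_of_le_of_lt hs hx₀mem.1)
  -- nonnegativity over intervals outside
  have hInn : ∀ l r : ℝ, l ≤ r → (r ≤ up ∨ um ≤ l) → 0 ≤ ∫ x in l..r, g x := by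
    intro l r hlr hside
    apply intervalIntegral.integral_nonneg hlr
    intro x hx
    apply mul_nonneg (hηdd_nonneg x)
    rcases hside with hs | hs
    · exact hψ_nonneg_left x (hx.2.trans hs)
    · exact hψ_nonneg_right x (hs.trans hx.1)
  -- nonpositivity over subintervals of [up, um]
  have hInp : ∀ l r : ℝ, up ≤ l → l ≤ r → r ≤ um → (∫ x in l..r, g x) ≤ 0 := by
    intro l r hul hlr hrm
    have : 0 ≤ ∫ x in l..r, (fun x => -g x) x := by
      apply intervalIntegral.integral_nonneg hlr
      intro x hx
      simp only [neg_nonneg]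
      apply mul_nonpos_of_nonneg_of_nonpos (hηdd_nonneg x)
      exact hψ_nonpos_mid x ⟨hul.trans hx.1, hx.2.trans hrm⟩
    rw [intervalIntegral.integral_neg] at this
    linarith
  -- the key derivative computation
  have keyderiv : ∀ a x : ℝ,
      HasDerivAt (fun b => (q a - q b - deriv η b * (A a - A b))
        - σ0 * (η a - η b - deriv η b * (a - b)))
        (deriv (deriv η) x * (σ0 * (a - x) - (A a - A x))) x := by
    intro a x
    have hd1 : HasDerivAt (fun b => q a - q b) (0 - deriv A x * deriv η x) x :=
      (hasDerivAt_const x (q a)).sub (hq x)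
    have hd2 : HasDerivAt (fun b => deriv η b * (A a - A b))
        (deriv (deriv η) x * (A a - A x) + deriv η x * (0 - deriv A x)) x :=
      ((hηd_diff x).hasDerivAt).mul ((hasDerivAt_const x (A a)).sub (hA_diff x).hasDerivAt)
    have hd3 : HasDerivAt (fun b => η a - η b) (0 - deriv η x) x :=
      (hasDerivAt_const x (η a)).sub (hη_diff x).hasDerivAt
    have hd4 : HasDerivAt (fun b => deriv η b * (a - b))
        (deriv (deriv η) x * (a - x) + deriv η x * (0 - 1)) x :=
      ((hηd_diff x).hasDerivAt).mul ((hasDerivAt_const x a).sub (hasDerivAt_id x))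
    have := (hd1.sub hd2).sub ((hd3.sub hd4).const_mul σ0)
    exact this.congr_deriv (by ring)
  -- FTC applications
  have hFTC1 : (q up - q bup - deriv η bup * (A up - A bup))
      - σ0 * (η up - η bup - deriv η bup * (up - bup)) = ∫ x in up..bup, g x := by
    have := intervalIntegral.integral_eq_sub_of_hasDerivAt
      (f := fun b => (q up - q b - deriv η b * (A up - A b))
        - σ0 * (η up - η b - deriv η b * (up - b)))
      (f' := fun x => deriv (deriv η) x * (σ0 * (up - x) - (A up - A x)))
      (a := up) (b := bup)
      (fun x _ => keyderiv up x)
      ((hηdd_cont.mul (continuous_const.mul (continuous_const.sub continuous_id)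
        |>.sub (continuous_const.sub hA_cont))).intervalIntegrable _ _)
    rw [this]
    ring
  have hFTC2 : (q um - q bum - deriv η bum * (A um - A bum))
      - σ0 * (η um - η bum - deriv η bum * (um - bum)) = ∫ x in um..bum, g x := by
    have heq : ∀ x : ℝ, deriv (deriv η) x * (σ0 * (um - x) - (A um - A x)) = g x := by
      intro x
      simp only [hgdef, hψdef]
      rw [hRH]
      ring
    have := intervalIntegral.integral_eq_sub_of_hasDerivAt
      (f := fun b => (q um - q b - deriv η b * (A um - A b))
        - σ0 * (η um - η b - deriv η b * (um - b)))
      (f' := fun x => deriv (deriv η) x * (σ0 * (um - x) - (A um - A x)))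
      (a := um) (b := bum)
      (fun x _ => keyderiv um x)
      (by
        have : (fun x => deriv (deriv η) x * (σ0 * (um - x) - (A um - A x))) = g :=
          funext heq
        rw [this]
        exact hInt _ _)
    rw [intervalIntegral.integral_congr (g := g) (fun x _ => heq x)] at this
    beta_reduce at this
    rw [this]
    ring
  -- rewrite the goal
  rw [show (((q up - q bup - deriv η bup * (A up - A bup))
        - (q um - q bum - deriv η bum * (A um - A bum)))
      - σ up um * ((η up - η bup - deriv η bup * (up - bup))
        - (η um - η bum - deriv η bum * (um - bum))))
      = ((q up - q bup - deriv η bup * (A up - A bup))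
          - σ0 * (η up - η bup - deriv η bup * (up - bup)))
        - ((q um - q bum - deriv η bum * (A um - A bum))
          - σ0 * (η um - η bum - deriv η bum * (um - bum))) from by rw [hσ0]; ring]
  rw [hFTC1, hFTC2]
  -- split the integrals
  have hsplit : (∫ x in up..bup, g x) - (∫ x in um..bum, g x)
      = (∫ x in up..um, g x) - (∫ x in bup..bum, g x) := by
    have e1 : (∫ x in up..um, g x) + (∫ x in um..bup, g x) = ∫ x in up..bup, g x :=
      intervalIntegral.integral_add_adjacent_intervals (hInt up um) (hInt um bup)
    have e2 : (∫ x in um..bup, g x) + (∫ x in bup..bum, g x) = ∫ x in um..bum, g x :=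
      intervalIntegral.integral_add_adjacent_intervals (hInt um bup) (hInt bup bum)
    linarith
  rw [hsplit, sub_neg]
  -- now show ∫ up..um < ∫ bup..bum
  have hbb : bup < bum := by linarith
  have hI1 : (∫ x in up..um, g x) ≤ 0 := hInp up um le_rfl h1 le_rfl
  rcases lt_or_ge up bup with hB | hbup_le
  · -- Case B : up < bup
    have hum_bum : um < bum := by linarith
    rcases le_or_gt bup um with hB1 | hB2
    · -- up < bup ≤ um
      have e3 : (∫ x in bup..um, g x) + (∫ x in um..bum, g x) = ∫ x in bup..bum, g x :=
        intervalIntegral.integral_add_adjacent_intervals (hInt bup um) (hInt um bum)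
      have e4 : (∫ x in up..bup, g x) + (∫ x in bup..um, g x) = ∫ x in up..um, g x :=
        intervalIntegral.integral_add_adjacent_intervals (hInt up bup) (hInt bup um)
      have h5 : (∫ x in up..bup, g x) ≤ 0 := hInp up bup le_rfl hB.le hB1
      have h6 : 0 < ∫ x in um..bum, g x := hIpos um bum hum_bum (Or.inr le_rfl)
      linarith
    · -- um < bup
      have h6 : 0 < ∫ x in bup..bum, g x := hIpos bup bum hbb (Or.inr hB2.le)
      linarith
  · rcases lt_or_ge bum um with hC | hbum_ge
    · -- Case C : bum < um (and bup ≤ up)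
      have hbup_up : bup < up := by linarith
      rcases le_or_gt up bum with hC1 | hC2
      · -- up ≤ bum < um
        have e3 : (∫ x in bup..up, g x) + (∫ x in up..bum, g x) = ∫ x in bup..bum, g x :=
          intervalIntegral.integral_add_adjacent_intervals (hInt bup up) (hInt up bum)
        have e4 : (∫ x in up..bum, g x) + (∫ x in bum..um, g x) = ∫ x in up..um, g x :=
          intervalIntegral.integral_add_adjacent_intervals (hInt up bum) (hInt bum um)
        have h5 : (∫ x in bum..um, g x) ≤ 0 := hInp bum um hC1 hC.le le_rfl
        have h6 : 0 < ∫ x in bup..up, g x := hIpos bup up hbup_up (Or.inl le_rfl)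
        linarith
      · -- bum < up
        have h6 : 0 < ∫ x in bup..bum, g x := hIpos bup bum hbb (Or.inl hC2.le)
        linarith
    · -- Case A : bup ≤ up and um ≤ bum
      have e3 : (∫ x in bup..up, g x) + (∫ x in up..um, g x) = ∫ x in bup..um, g x :=
        intervalIntegral.integral_add_adjacent_intervals (hInt bup up) (hInt up um)
      have e4 : (∫ x in bup..um, g x) + (∫ x in um..bum, g x) = ∫ x in bup..bum, g x :=
        intervalIntegral.integral_add_adjacent_intervals (hInt bup um) (hInt um bum)
      have hlen : δ/4 ≤ up - bup ∨ δ/4 ≤ bum - um := by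
        by_contra hcon
        push_neg at hcon
        linarith [hcon.1, hcon.2]
      rcases hlen with hl | hl
      · have h6 : 0 < ∫ x in bup..up, g x :=
          hIpos bup up (by linarith) (Or.inl le_rfl)
        have h7 : 0 ≤ ∫ x in um..bum, g x := hInn um bum hbum_ge (Or.inr le_rfl)
        linarith
      · have h6 : 0 < ∫ x in um..bum, g x :=
          hIpos um bum (by linarith) (Or.inr le_rfl)
        have h7 : 0 ≤ ∫ x in bup..up, g x := hInn bup up hbup_le (Or.inl le_rfl)
        linarith
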